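/- Let f : ℍ → ℍ be a function on the real quaternions. Suppose f is quaternion-differentiable on the left at every point, i.e., for every q ∈ ℍ there exists d ∈ ℍ such that h⁻¹·(f(q + h) − f(q)) tends to d as h tends to 0 through nonzero quaternions. Then there exist quaternions a, b ∈ ℍ such that f(q) = a + q·b for all q ∈ ℍ. -/

import Mathlib

open Filter Topology Complex

local notation "ℍ" => Quaternion ℝ

namespace Stmt2Aux

noncomputable def qi : ℍ := ⟨0,1,0,0⟩
noncomputable def qj : ℍ := ⟨0,0,1,0⟩
noncomputable def qk : ℍ := ⟨0,0,0,1⟩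

@[simp] lemma qi_re : qi.re = 0 := rfl
@[simp] lemma qi_imI : qi.imI = 1 := rfl
@[simp] lemma qi_imJ : qi.imJ = 0 := rfl
@[simp] lemma qi_imK : qi.imK = 0 := rfl
@[simp] lemma qj_re : qj.re = 0 := rfl
@[simp] lemma qj_imI : qj.imI = 0 := rfl
@[simp] lemma qj_imJ : qj.imJ = 1 := rfl
@[simp] lemma qj_imK : qj.imK = 0 := rfl
@[simp] lemma qk_re : qk.re = 0 := rfl
@[simp] lemma qk_imI : qk.imI = 0 := rfl
@[simp] lemma qk_imJ : qk.imJ = 0 := rfl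
@[simp] lemma qk_imK : qk.imK = 1 := rfl

lemma qi_mul_qi : qi * qi = -1 := by
  ext <;> simp [Quaternion.re_mul, Quaternion.imI_mul, Quaternion.imJ_mul, Quaternion.imK_mul, Quaternion.re_one, Quaternion.imI_one, Quaternion.imJ_one, Quaternion.imK_one]

noncomputable def φ : ℂ →ₐ[ℝ] ℍ := Complex.liftAux qi qi_mul_qi

lemma φ_apply (z : ℂ) : φ z = (⟨z.re, z.im, 0, 0⟩ : ℍ) := by
  show Complex.liftAux qi qi_mul_qi z = _
  rw [Complex.liftAux_apply]
  ext <;> simp [Quaternion.re_coe, Quaternion.imI_coe, Quaternion.imJ_coe, Quaternion.imK_coe, Quaternion.re_smul]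

lemma norm_φ (z : ℂ) : ‖φ z‖ = ‖z‖ := by
  have h1 : ∀ a : ℍ, ‖a‖ = Real.sqrt (Quaternion.normSq a) := fun a => by
    rw [Quaternion.normSq_eq_norm_mul_self, Real.sqrt_mul_self (norm_nonneg _)]
  rw [h1, Complex.norm_def, Complex.normSq_apply]
  congr 1
  rw [Quaternion.normSq_def', φ_apply]
  simp
  ring

noncomputable instance : Module ℂ ℍ := Module.compHom ℍ (φ.toRingHom : ℂ →+* ℍ)

lemma csmul_def (z : ℂ) (q : ℍ) : z • q = φ z * q := rfl

instance : IsScalarTower ℝ ℂ ℍ := ⟨fun r z q => by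
  simp only [csmul_def, map_smul, Algebra.smul_mul_assoc]⟩

noncomputable instance : NormedSpace ℂ ℍ where
  norm_smul_le z q := by rw [csmul_def, norm_mul, norm_φ]

lemma norm_csmul (z : ℂ) (q : ℍ) : ‖z • q‖ = ‖z‖ * ‖q‖ := by
  rw [csmul_def, norm_mul, norm_φ]

end Stmt2Aux

namespace Stmt2Aux

lemma continuous_φ : Continuous (φ : ℂ → ℍ) := by
  have h : (φ : ℂ → ℍ) = fun z => ((z.re : ℝ) : ℍ) + z.im • qi := by
    funext z
    rw [φ_apply]
    ext <;> simp [Quaternion.re_coe, Quaternion.imI_coe, Quaternion.imJ_coe, Quaternion.imK_coe, Quaternion.re_smul]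
  rw [h]
  exact (Quaternion.continuous_coe.comp Complex.continuous_re).add
    (Complex.continuous_im.smul continuous_const)

lemma φ_injective : Function.Injective (φ : ℂ → ℍ) := by
  intro a b h
  have : ‖a - b‖ = 0 := by rw [← norm_φ, map_sub, h, sub_self, norm_zero]
  exact sub_eq_zero.mp (norm_eq_zero.mp this)

section Main

variable {f D : ℍ → ℍ}

/-- the quaternionic differentiability hypothesis -/
def QDiff (f D : ℍ → ℍ) : Prop :=
  ∀ q : ℍ, Filter.Tendsto (fun h : ℍ => h⁻¹ * (f (q + h) - f q))
    (nhdsWithin 0 {0}ᶜ) (nhds (D q))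

lemma slice_hasDerivAt (hD : QDiff f D) (q : ℍ) (z : ℂ) :
    HasDerivAt (fun w : ℂ => f (q + φ w)) (D (q + φ z)) z := by
  rw [hasDerivAt_iff_tendsto_slope]
  set q' := q + φ z with hq'
  have hmap : Tendsto (fun w : ℂ => φ (w - z)) (𝓝[≠] z) (𝓝[≠] (0:ℍ)) := by
    rw [tendsto_nhdsWithin_iff]
    constructor
    · have : Tendsto (fun w : ℂ => φ (w - z)) (𝓝 z) (𝓝 (φ (z - z))) :=
        (continuous_φ.comp (continuous_id.sub continuous_const)).tendsto z
      rw [sub_self, map_zero] at this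
      exact this.mono_left nhdsWithin_le_nhds
    · filter_upwards [eventually_mem_nhdsWithin] with w hw
      simp only [Set.mem_compl_iff, Set.mem_singleton_iff] at hw ⊢
      intro hc
      exact hw (sub_eq_zero.mp (φ_injective (by rwa [map_zero])))
  have hcomp := (hD q').comp hmap
  apply hcomp.congr
  intro w
  show (φ (w - z))⁻¹ * (f (q' + φ (w - z)) - f q') = slope (fun w => f (q + φ w)) z w
  have e1 : q' + φ (w - z) = q + φ w := by rw [hq', map_sub]; abel
  rw [slope_def_module, csmul_def, map_inv₀, e1, hq']

lemma continuous_of_qdiff (hD : QDiff f D) : Continuous f := by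
  rw [continuous_iff_continuousAt]
  intro q
  have h1 : Tendsto (fun h : ℍ => f (q + h)) (𝓝[≠] 0) (𝓝 (f q)) := by
    have h2 : Tendsto (fun h : ℍ => f q + h * (h⁻¹ * (f (q + h) - f q)))
        (𝓝[≠] 0) (𝓝 (f q + 0 * D q)) :=
      tendsto_const_nhds.add
        ((tendsto_nhdsWithin_of_tendsto_nhds tendsto_id).mul (hD q))
    rw [zero_mul, add_zero] at h2
    apply h2.congr'
    filter_upwards [eventually_mem_nhdsWithin] with h hh
    simp only [Set.mem_compl_iff, Set.mem_singleton_iff] at hh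
    rw [← mul_assoc, mul_inv_cancel₀ hh, one_mul]
    abel
  have h0 : Tendsto (fun h : ℍ => f (q + h)) (pure 0) (𝓝 (f q)) := by
    simpa using tendsto_pure_nhds (fun h : ℍ => f (q + h)) 0
  have hsup : Tendsto (fun h : ℍ => f (q + h)) (𝓝 0) (𝓝 (f q)) := by
    rw [← nhdsNE_sup_pure]
    exact h1.sup h0
  have hx : Tendsto (fun x : ℍ => x - q) (𝓝 q) (𝓝 (q - q)) :=
    (continuous_id.sub continuous_const).tendsto q
  rw [sub_self] at hx
  have hcmp := hsup.comp hx
  have hfun : ((fun h : ℍ => f (q + h)) ∘ fun x => x - q) = f := by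
    funext x; simp only [Function.comp_apply]; congr 1; abel
  rwa [hfun] at hcmp

end Main
end Stmt2Aux

namespace Stmt2Aux

lemma φ_real (s : ℝ) : φ ((s : ℂ)) = s • (1 : ℍ) := by
  rw [φ_apply]; ext <;> simp [Quaternion.re_one, Quaternion.imI_one, Quaternion.imJ_one, Quaternion.imK_one]

lemma φ_real_mul_I (s : ℝ) : φ ((s : ℂ) * Complex.I) = s • qi := by
  rw [φ_apply]; ext <;> simp [Quaternion.re_smul]

lemma φ_I : φ Complex.I = qi := Complex.liftAux_apply_I _ _

section Main2

/-- Slice-differentiability hypothesis: `G'` is the complex derivative of `G`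
on every `i`-slice. -/
def SliceDeriv (G G' : ℍ → ℍ) : Prop :=
  ∀ (q : ℍ) (z : ℂ), HasDerivAt (fun w : ℂ => G (q + φ w)) (G' (q + φ z)) z

/-- Cauchy-type integral representation. -/
noncomputable def Rep (G : ℍ → ℍ) (q : ℍ) : ℍ :=
  (2 * (Real.pi : ℂ) * Complex.I)⁻¹ •
    ∮ z in C(0, 1), (1 / z) • z⁻¹ • G (q + φ z)

lemma rep_eq {G G' : ℍ → ℍ} (h : SliceDeriv G G') (q : ℍ) : G' q = Rep G q := by
  have hdiff : Differentiable ℂ (fun w : ℂ => G (q + φ w)) :=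
    fun z => (h q z).differentiableAt
  have hser := (hdiff.hasFPowerSeriesOnBall 0 (R := 1) one_pos).hasFPowerSeriesAt
  have hder := hser.deriv
  have hd0 : deriv (fun w : ℂ => G (q + φ w)) 0 = G' q := by
    simpa using (h q 0).deriv
  have hcoeff :
      (cauchyPowerSeries (fun w : ℂ => G (q + φ w)) 0 1 1 fun _ => (1:ℂ)) = Rep G q := by
    rw [cauchyPowerSeries_apply]
    simp only [Rep, sub_zero, pow_one, NNReal.coe_one]
  rw [← hd0, hder]
  simpa using hcoeff

lemma norm_two_pi_I_inv : ‖(2 * (Real.pi : ℂ) * Complex.I)⁻¹‖ = (2 * Real.pi)⁻¹ := by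
  rw [norm_inv, norm_mul, norm_mul, Complex.norm_I, mul_one]
  norm_num [Complex.norm_real, Real.norm_eq_abs, abs_of_pos Real.pi_pos]

lemma sphere_ne_zero {z : ℂ} (hz : z ∈ Metric.sphere (0:ℂ) 1) : z ≠ 0 := by
  intro h
  rw [mem_sphere_zero_iff_norm] at hz
  rw [h] at hz; simp at hz

lemma norm_sphere_one {z : ℂ} (hz : z ∈ Metric.sphere (0:ℂ) 1) : ‖z‖ = 1 :=
  mem_sphere_zero_iff_norm.mp hz

lemma rep_continuous {G : ℍ → ℍ} (hG : Continuous G) : Continuous (Rep G) := by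
  have hInt : ∀ p : ℍ, CircleIntegrable (fun z => (1 / z) • z⁻¹ • G (p + φ z)) 0 1 := by
    intro p
    apply ContinuousOn.circleIntegrable zero_le_one
    exact (continuousOn_const.div continuousOn_id fun z hz => sphere_ne_zero hz).smul
      ((continuousOn_id.inv₀ fun z hz => sphere_ne_zero hz).smul
        ((hG.comp (continuous_const.add continuous_φ)).continuousOn))
  rw [continuous_iff_continuousAt]
  intro q₀
  rw [Metric.continuousAt_iff]
  intro ε hε
  obtain ⟨δ, hδ, H⟩ := (Metric.uniformContinuousOn_iff).1
    ((isCompact_closedBall q₀ 3).uniformContinuousOn_of_continuous hG.continuousOn)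
    (ε / 2) (by positivity)
  refine ⟨min δ 1, by positivity, fun {q} hq => ?_⟩
  have hqδ : dist q q₀ < δ := lt_of_lt_of_le hq (min_le_left _ _)
  have hq1 : dist q q₀ < 1 := lt_of_lt_of_le hq (min_le_right _ _)
  have hsub : (∮ z in C(0, 1), (1 / z) • z⁻¹ • G (q + φ z)) -
      (∮ z in C(0, 1), (1 / z) • z⁻¹ • G (q₀ + φ z)) =
      ∮ z in C(0, 1), ((1 / z) • z⁻¹ • G (q + φ z) - (1 / z) • z⁻¹ • G (q₀ + φ z)) :=
    (circleIntegral.integral_sub (hInt q) (hInt q₀)).symm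
  have hbound : ∀ z ∈ Metric.sphere (0:ℂ) 1,
      ‖(1 / z) • z⁻¹ • G (q + φ z) - (1 / z) • z⁻¹ • G (q₀ + φ z)‖ ≤ ε / 2 := by
    intro z hz
    rw [← smul_sub, ← smul_sub, norm_csmul, norm_csmul, norm_inv,
      norm_sphere_one hz]
    simp only [one_div, norm_inv, norm_sphere_one hz, inv_one, one_mul]
    have hx : q + φ z ∈ Metric.closedBall q₀ 3 := by
      rw [Metric.mem_closedBall, dist_eq_norm]
      have : q + φ z - q₀ = (q - q₀) + φ z := by abel
      rw [this]
      calc ‖(q - q₀) + φ z‖ ≤ ‖q - q₀‖ + ‖φ z‖ := norm_add_le _ _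
        _ ≤ 1 + 1 := by
            rw [norm_φ, norm_sphere_one hz]
            exact add_le_add (le_of_lt (by rwa [dist_eq_norm] at hq1)) le_rfl
        _ ≤ 3 := by norm_num
    have hy : q₀ + φ z ∈ Metric.closedBall q₀ 3 := by
      rw [Metric.mem_closedBall, dist_eq_norm]
      have : q₀ + φ z - q₀ = φ z := by abel
      rw [this, norm_φ, norm_sphere_one hz]; norm_num
    have hd : dist (q + φ z) (q₀ + φ z) < δ := by rwa [dist_add_right]
    have := H _ hx _ hy hd
    rw [dist_eq_norm] at this
    exact le_of_lt this
  have hle := circleIntegral.norm_integral_le_of_norm_le_const zero_le_one hbound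
  rw [← hsub] at hle
  rw [Rep, Rep, dist_eq_norm, ← smul_sub, norm_smul, norm_two_pi_I_inv]
  calc (2 * Real.pi)⁻¹ * ‖_ - _‖ ≤ (2 * Real.pi)⁻¹ * (2 * Real.pi * 1 * (ε / 2)) := by
        apply mul_le_mul_of_nonneg_left hle
        positivity
    _ = ε / 2 := by
        field_simp
    _ < ε := by linarith

end Main2
end Stmt2Aux

namespace Stmt2Aux

/-- second-level derivative function -/
noncomputable def Cof (G : ℍ → ℍ) : ℍ → ℍ := fun q => deriv (fun z : ℂ => G (q + φ z)) 0

lemma slice_diff2 {G G' : ℍ → ℍ} (h : SliceDeriv G G') (q : ℍ) :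
    Differentiable ℂ (fun w : ℂ => G' (q + φ w)) := by
  have hdiff : Differentiable ℂ (fun w : ℂ => G (q + φ w)) :=
    fun w => (h q w).differentiableAt
  have hA : AnalyticOnNhd ℂ (fun w : ℂ => G (q + φ w)) Set.univ :=
    fun w _ => hdiff.analyticAt w
  have hA' := hA.deriv
  have hderiv : deriv (fun w : ℂ => G (q + φ w)) = fun w : ℂ => G' (q + φ w) :=
    funext fun w => (h q w).deriv
  rw [← hderiv]
  exact fun w => (hA' w trivial).differentiableAt

lemma level2 {G G' : ℍ → ℍ} (h : SliceDeriv G G') : SliceDeriv G' (Cof G') := by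
  intro q z
  have h0 : HasDerivAt (fun v : ℂ => G' ((q + φ z) + φ v)) (Cof G' (q + φ z)) 0 :=
    (slice_diff2 h (q + φ z) 0).hasDerivAt
  have hsub : HasDerivAt (fun w : ℂ => w - z) 1 z := (hasDerivAt_id z).sub_const z
  have hc := HasDerivAt.scomp (x := z) (by rwa [sub_self]) hsub
  simp only [one_smul] at hc
  have efun : ((fun v : ℂ => G' ((q + φ z) + φ v)) ∘ fun w : ℂ => w - z) =
      fun w : ℂ => G' (q + φ w) := by
    funext w
    simp only [Function.comp_apply, map_sub]
    congr 1
    abel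
  rwa [efun] at hc

lemma dir_real {G G' : ℍ → ℍ} (h : SliceDeriv G G') (q : ℍ) (t : ℝ) :
    HasDerivAt (fun s : ℝ => G (q + s • (1:ℍ))) (G' (q + t • (1:ℍ))) t := by
  have hh : HasDerivAt (fun s : ℝ => (s : ℂ)) 1 t := by
    simpa using (hasDerivAt_id t).ofReal_comp
  have := (h q (t : ℂ)).scomp (x := t) hh
  simp only [one_smul] at this
  have efun : ((fun w : ℂ => G (q + φ w)) ∘ fun s : ℝ => (s : ℂ)) =
      fun s : ℝ => G (q + s • (1:ℍ)) := by
    funext s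
    simp only [Function.comp_apply, φ_real]
  rwa [efun, φ_real] at this

lemma dir_i {G G' : ℍ → ℍ} (h : SliceDeriv G G') (q : ℍ) (t : ℝ) :
    HasDerivAt (fun s : ℝ => G (q + s • qi)) (qi * G' (q + t • qi)) t := by
  have hh : HasDerivAt (fun s : ℝ => (s : ℂ) * Complex.I) Complex.I t := by
    have h1 : HasDerivAt (fun s : ℝ => (s : ℂ)) 1 t := by
      simpa using (hasDerivAt_id t).ofReal_comp
    simpa using h1.mul_const Complex.I
  have := (h q ((t : ℂ) * Complex.I)).scomp (x := t) hh
  have efun : ((fun w : ℂ => G (q + φ w)) ∘ fun s : ℝ => (s : ℂ) * Complex.I) =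
      fun s : ℝ => G (q + s • qi) := by
    funext s
    simp only [Function.comp_apply, φ_real_mul_I]
  rw [efun, φ_real_mul_I, csmul_def, φ_I] at this
  exact this

end Stmt2Aux

namespace Stmt2Aux
section Conj

/-- conjugated function -/
noncomputable def conjF (u : ℍ) (f : ℍ → ℍ) : ℍ → ℍ := fun p => u⁻¹ * f (u * p * u⁻¹) * u

variable {f D : ℍ → ℍ} {u : ℍ}

set_option maxHeartbeats 1000000 in
lemma qdiff_conj (hD : QDiff f D) (hu : u ≠ 0) : QDiff (conjF u f) (conjF u D) := by
  intro p
  set q' := u * p * u⁻¹ with hq'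
  have hmap : Tendsto (fun h : ℍ => u * h * u⁻¹) (𝓝[≠] (0:ℍ)) (𝓝[≠] (0:ℍ)) := by
    rw [tendsto_nhdsWithin_iff]
    constructor
    · have hcont : Continuous (fun h : ℍ => u * h * u⁻¹) :=
        (continuous_const.mul continuous_id).mul continuous_const
      have h0 := hcont.tendsto 0
      simp only [mul_zero, zero_mul] at h0
      exact h0.mono_left nhdsWithin_le_nhds
    · filter_upwards [eventually_mem_nhdsWithin] with h hh
      simp only [Set.mem_compl_iff, Set.mem_singleton_iff] at hh ⊢
      exact mul_ne_zero (mul_ne_zero hu hh) (inv_ne_zero hu)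
  have hcomp := (hD q').comp hmap
  have hconj : Tendsto (fun x : ℍ => u⁻¹ * x * u) (𝓝 (D q')) (𝓝 (u⁻¹ * D q' * u)) :=
    (((continuous_const.mul continuous_id).mul continuous_const).tendsto _)
  have hfin := hconj.comp hcomp
  apply hfin.congr
  intro h
  show u⁻¹ * ((u * h * u⁻¹)⁻¹ * (f (q' + u * h * u⁻¹) - f q')) * u
      = h⁻¹ * (conjF u f (p + h) - conjF u f p)
  have harg : u * (p + h) * u⁻¹ = q' + u * h * u⁻¹ := by rw [hq']; noncomm_ring
  simp only [conjF, harg, ← hq']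
  have hinv : (u * h * u⁻¹)⁻¹ = u * (h⁻¹ * u⁻¹) := by
    rw [mul_inv_rev, mul_inv_rev, inv_inv]
  rw [hinv]
  generalize f (q' + u * h * u⁻¹) = a
  generalize f q' = b
  have e1 : u⁻¹ * a * u - u⁻¹ * b * u = u⁻¹ * (a - b) * u := by noncomm_ring
  rw [e1]
  have e2 : u⁻¹ * (u * (h⁻¹ * u⁻¹) * (a - b)) * u
      = (u⁻¹ * u) * (h⁻¹ * (u⁻¹ * (a - b) * u)) := by noncomm_ring
  rw [e2, inv_mul_cancel₀ hu, one_mul]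

lemma conjF_slice_const {G : ℍ → ℍ} (hu : u ≠ 0) {e : ℍ} (hue : u * qi = e * u)
    (hconst : ∀ p z, conjF u G (p + φ z) = conjF u G p) (q : ℍ) (t : ℝ) :
    G (q + t • e) = G q := by
  set p := u⁻¹ * q * u with hp
  have hq : u * p * u⁻¹ = q := by
    rw [hp, ← mul_assoc, ← mul_assoc, mul_inv_cancel₀ hu, one_mul, mul_assoc,
      mul_inv_cancel₀ hu, mul_one]
  have he : u * qi * u⁻¹ = e := by
    rw [hue, mul_assoc, mul_inv_cancel₀ hu, mul_one]
  have harg : u * (p + φ ((t:ℂ) * Complex.I)) * u⁻¹ = q + t • e := by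
    rw [φ_real_mul_I, mul_add, add_mul, hq]
    congr 1
    rw [mul_smul_comm, smul_mul_assoc, he]
  have h1 := hconst p ((t:ℂ) * Complex.I)
  simp only [conjF, harg, hq] at h1
  have h0 := congrArg (fun x => u * x * u⁻¹) h1
  have h2 : u * (u⁻¹ * G (q + t • e)) = u * (u⁻¹ * G q) := by
    simpa only [← mul_assoc, mul_inv_cancel₀ hu, one_mul, mul_assoc,
      inv_mul_cancel₀ hu, mul_one] using h0
  exact mul_left_cancel₀ (inv_ne_zero hu) (mul_left_cancel₀ hu h2)

end Conj
end Stmt2Aux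

namespace Stmt2Aux
section Transport

variable {f D : ℍ → ℍ} {u : ℍ}

lemma conj_cancel (hu : u ≠ 0) (x : ℍ) : u * (u⁻¹ * x * u) * u⁻¹ = x := by
  rw [← mul_assoc, ← mul_assoc, mul_inv_cancel₀ hu, one_mul, mul_assoc,
    mul_inv_cancel₀ hu, mul_one]

lemma conj_arg (hu : u ≠ 0) {e : ℍ} (hue : u * qi = e * u) (q : ℍ) (s : ℝ) :
    u * ((u⁻¹ * q * u) + s • qi) * u⁻¹ = q + s • e := by
  have he : u * qi * u⁻¹ = e := by
    rw [hue, mul_assoc, mul_inv_cancel₀ hu, mul_one]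
  rw [mul_add, add_mul]
  congr 1
  · rw [← mul_assoc, ← mul_assoc, mul_inv_cancel₀ hu, one_mul, mul_assoc,
      mul_inv_cancel₀ hu, mul_one]
  · rw [mul_smul_comm, smul_mul_assoc, he]

lemma dir_conj {G G' : ℍ → ℍ} (hu : u ≠ 0) {e : ℍ} (hue : u * qi = e * u)
    (h : ∀ p t, HasDerivAt (fun s : ℝ => conjF u G (p + s • qi))
      (qi * conjF u G' (p + t • qi)) t)
    (q : ℍ) (t : ℝ) :
    HasDerivAt (fun s : ℝ => G (q + s • e)) (e * G' (q + t • e)) t := by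
  have he : u * qi * u⁻¹ = e := by
    rw [hue, mul_assoc, mul_inv_cancel₀ hu, mul_one]
  set p := u⁻¹ * q * u with hp
  have hder := ((h p t).const_mul u).mul_const u⁻¹
  have hfun : (fun s : ℝ => u * conjF u G (p + s • qi) * u⁻¹) =
      fun s : ℝ => G (q + s • e) := by
    funext s
    show u * (u⁻¹ * G (u * (p + s • qi) * u⁻¹) * u) * u⁻¹ = _
    rw [conj_cancel hu, hp, conj_arg hu hue]
  have hval : u * (qi * conjF u G' (p + t • qi)) * u⁻¹ = e * G' (q + t • e) := by
    show u * (qi * (u⁻¹ * G' (u * (p + t • qi) * u⁻¹) * u)) * u⁻¹ = _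
    rw [hp, conj_arg hu hue]
    generalize G' (q + t • e) = Y
    rw [show u * (qi * (u⁻¹ * Y * u)) * u⁻¹ = (u * qi * u⁻¹) * Y * (u * u⁻¹) by
      noncomm_ring, he, mul_inv_cancel₀ hu, mul_one]
  rw [hfun, hval] at hder
  exact hder

lemma cof_conj (hD : QDiff f D) (hu : u ≠ 0) :
    Cof (conjF u D) = conjF u (Cof D) := by
  funext p
  have S2u := level2 (slice_hasDerivAt (qdiff_conj hD hu))
  have h1 : HasDerivAt (fun s : ℝ => conjF u D (p + s • (1:ℍ)))
      (Cof (conjF u D) p) 0 := by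
    simpa using dir_real S2u p 0
  have S2 := level2 (slice_hasDerivAt hD)
  have h2' := dir_real S2 (u * p * u⁻¹) 0
  have h2 := (h2'.const_mul u⁻¹).mul_const u
  simp only [zero_smul, add_zero] at h2
  have hfun : (fun s : ℝ => u⁻¹ * D ((u * p * u⁻¹) + s • (1:ℍ)) * u) =
      fun s : ℝ => conjF u D (p + s • (1:ℍ)) := by
    funext s
    show _ = u⁻¹ * D (u * (p + s • (1:ℍ)) * u⁻¹) * u
    congr 2
    rw [mul_add, add_mul, mul_smul_comm, smul_mul_assoc, mul_one,
      mul_inv_cancel₀ hu]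
  rw [hfun] at h2
  have := h1.unique h2
  rw [this]
  rfl

end Transport
end Stmt2Aux

namespace Stmt2Aux
section Units

lemma norm_qi : ‖qi‖ = 1 := by
  have h1 : ‖qi‖ = Real.sqrt (Quaternion.normSq qi) := by
    rw [Quaternion.normSq_eq_norm_mul_self, Real.sqrt_mul_self (norm_nonneg _)]
  rw [h1]
  have : Quaternion.normSq qi = 1 := by simp [Quaternion.normSq_def']
  rw [this, Real.sqrt_one]

lemma norm_qj : ‖qj‖ = 1 := by
  have h1 : ‖qj‖ = Real.sqrt (Quaternion.normSq qj) := by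
    rw [Quaternion.normSq_eq_norm_mul_self, Real.sqrt_mul_self (norm_nonneg _)]
  rw [h1]
  have : Quaternion.normSq qj = 1 := by simp [Quaternion.normSq_def']
  rw [this, Real.sqrt_one]

lemma norm_qk : ‖qk‖ = 1 := by
  have h1 : ‖qk‖ = Real.sqrt (Quaternion.normSq qk) := by
    rw [Quaternion.normSq_eq_norm_mul_self, Real.sqrt_mul_self (norm_nonneg _)]
  rw [h1]
  have : Quaternion.normSq qk = 1 := by simp [Quaternion.normSq_def']
  rw [this, Real.sqrt_one]

lemma qi_mul_qj : qi * qj = qk := by ext <;> simp [Quaternion.re_mul, Quaternion.imI_mul, Quaternion.imJ_mul, Quaternion.imK_mul]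
lemma qj_mul_qi : qj * qi = -qk := by ext <;> simp [Quaternion.re_mul, Quaternion.imI_mul, Quaternion.imJ_mul, Quaternion.imK_mul]

lemma u2_ne : (qi + qj : ℍ) ≠ 0 := by
  intro h
  have := congrArg QuaternionAlgebra.imI h
  simp [Quaternion.imI_zero] at this

lemma u3_ne : (qi + qk : ℍ) ≠ 0 := by
  intro h
  have := congrArg QuaternionAlgebra.imI h
  simp [Quaternion.imI_zero] at this

lemma u2_rel : (qi + qj) * qi = qj * (qi + qj) := by ext <;> simp [Quaternion.re_mul, Quaternion.imI_mul, Quaternion.imJ_mul, Quaternion.imK_mul]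
lemma u3_rel : (qi + qk) * qi = qk * (qi + qk) := by ext <;> simp [Quaternion.re_mul, Quaternion.imI_mul, Quaternion.imJ_mul, Quaternion.imK_mul]

end Units

section SliceConst

lemma slice_const_of_deriv_zero {G G' : ℍ → ℍ} (h : SliceDeriv G G')
    (hz : ∀ q, G' q = 0) (q : ℍ) (z : ℂ) : G (q + φ z) = G q := by
  have hF : ∀ w : ℂ, HasDerivAt (fun v : ℂ => G (q + φ v)) 0 w := fun w => by
    have := h q w
    rwa [hz] at this
  have hdiff : Differentiable ℂ fun v : ℂ => G (q + φ v) :=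
    fun w => (hF w).differentiableAt
  have hfd : ∀ w, fderiv ℂ (fun v : ℂ => G (q + φ v)) w = 0 := fun w => by
    rw [(hF w).hasFDerivAt.fderiv]
    refine ContinuousLinearMap.ext fun x => ?_
    simp [ContinuousLinearMap.smulRight_apply, smul_zero]
  have := is_const_of_fderiv_eq_zero (𝕜 := ℂ) hdiff hfd z 0
  simpa using this

end SliceConst
end Stmt2Aux

namespace Stmt2Aux
section Schwarz

variable {f D C : ℍ → ℍ}

lemma schwarz_zero
    (hDc : Continuous D) (hCc : Continuous C)
    (Hfi : ∀ q t, HasDerivAt (fun s : ℝ => f (q + s • qi)) (qi * D (q + t • qi)) t)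
    (Hfj : ∀ q t, HasDerivAt (fun s : ℝ => f (q + s • qj)) (qj * D (q + t • qj)) t)
    (HDi : ∀ q t, HasDerivAt (fun s : ℝ => D (q + s • qi)) (qi * C (q + t • qi)) t)
    (HDj : ∀ q t, HasDerivAt (fun s : ℝ => D (q + s • qj)) (qj * C (q + t • qj)) t)
    (q : ℍ) : C q = 0 := by
  have key : ∀ ε > (0:ℝ), ‖C q‖ ≤ ε := by
    intro ε hε
    obtain ⟨δ₀, hδ₀, hC⟩ := Metric.continuousAt_iff.1 hCc.continuousAt ε hε
    set δ : ℝ := δ₀ / 3 with hδdef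
    have hδ : 0 < δ := by positivity
    -- continuity of C on the square
    have hCb : ∀ s t : ℝ, s ∈ Set.Icc (0:ℝ) δ → t ∈ Set.Icc (0:ℝ) δ →
        ‖C (q + s • qi + t • qj) - C q‖ ≤ ε := by
      intro s t hs ht
      rw [← dist_eq_norm]
      apply le_of_lt
      apply hC
      rw [dist_eq_norm, show q + s • qi + t • qj - q = s • qi + t • qj by abel]
      calc ‖s • qi + t • qj‖ ≤ ‖s • qi‖ + ‖t • qj‖ := norm_add_le _ _
        _ = |s| + |t| := by
              simp [norm_smul, norm_qi, norm_qj, Real.norm_eq_abs]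
        _ ≤ δ + δ := add_le_add (by rw [_root_.abs_of_nonneg hs.1]; exact hs.2)
              (by rw [_root_.abs_of_nonneg ht.1]; exact ht.2)
        _ < δ₀ := by rw [hδdef]; linarith
    -- basic continuity of integrands
    have hpath : ∀ (c : ℍ) (v : ℍ), Continuous fun s : ℝ => c + s • v :=
      fun c v => continuous_const.add (continuous_id.smul continuous_const)
    -- inner FTC identities
    have inner1 : ∀ t : ℝ, D (q + δ • qi + t • qj) - D (q + t • qj) =
        ∫ s in (0:ℝ)..δ, qi * C (q + s • qi + t • qj) := by
      intro t
      have base : ∀ s : ℝ, (q + t • qj) + s • qi = q + s • qi + t • qj := fun s => by abel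
      have hint : IntervalIntegrable (fun s : ℝ => qi * C ((q + t • qj) + s • qi))
          MeasureTheory.volume 0 δ :=
        (continuous_const.mul (hCc.comp (hpath _ _))).intervalIntegrable _ _
      have hFTC := intervalIntegral.integral_eq_sub_of_hasDerivAt
        (f := fun s : ℝ => D ((q + t • qj) + s • qi))
        (f' := fun s : ℝ => qi * C ((q + t • qj) + s • qi))
        (fun s _ => HDi (q + t • qj) s) hint
      simp only [zero_smul, add_zero] at hFTC
      simp only [base] at hFTC
      rw [hFTC]
    have inner2 : ∀ s : ℝ, D (q + s • qi + δ • qj) - D (q + s • qi) =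
        ∫ t in (0:ℝ)..δ, qj * C (q + s • qi + t • qj) := by
      intro s
      have hint : IntervalIntegrable (fun t : ℝ => qj * C ((q + s • qi) + t • qj))
          MeasureTheory.volume 0 δ :=
        (continuous_const.mul (hCc.comp (hpath _ _))).intervalIntegrable _ _
      have hFTC := intervalIntegral.integral_eq_sub_of_hasDerivAt
        (f := fun t : ℝ => D ((q + s • qi) + t • qj))
        (f' := fun t : ℝ => qj * C ((q + s • qi) + t • qj))
        (fun t _ => HDj (q + s • qi) t) hint
      simp only [zero_smul, add_zero] at hFTC
      rw [hFTC]
    -- outer FTC identities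
    have outer1 : (∫ t in (0:ℝ)..δ, (qj * D (q + δ • qi + t • qj) - qj * D (q + t • qj))) =
        (f (q + δ • qi + δ • qj) - f (q + δ • qj)) - (f (q + δ • qi) - f q) := by
      have hint : IntervalIntegrable
          (fun t : ℝ => qj * D (q + δ • qi + t • qj) - qj * D (q + t • qj))
          MeasureTheory.volume 0 δ :=
        ((continuous_const.mul (hDc.comp ((hpath _ _)))).sub
          (continuous_const.mul (hDc.comp (hpath _ _)))).intervalIntegrable _ _
      have hFTC := intervalIntegral.integral_eq_sub_of_hasDerivAt
        (f := fun t : ℝ => f ((q + δ • qi) + t • qj) - f (q + t • qj))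
        (f' := fun t : ℝ => qj * D ((q + δ • qi) + t • qj) - qj * D (q + t • qj))
        (fun t _ => (Hfj (q + δ • qi) t).sub (Hfj q t)) (by exact hint)
      simp only [zero_smul, add_zero] at hFTC
      rw [hFTC]
    have outer2 : (∫ s in (0:ℝ)..δ, (qi * D (q + s • qi + δ • qj) - qi * D (q + s • qi))) =
        (f (q + δ • qi + δ • qj) - f (q + δ • qj)) - (f (q + δ • qi) - f q) := by
      have hint : IntervalIntegrable
          (fun s : ℝ => qi * D (q + s • qi + δ • qj) - qi * D (q + s • qi))
          MeasureTheory.volume 0 δ :=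
        ((continuous_const.mul (hDc.comp ((hpath _ _).add continuous_const))).sub
          (continuous_const.mul (hDc.comp (hpath _ _)))).intervalIntegrable _ _
      have base : ∀ s : ℝ, (q + δ • qj) + s • qi = q + s • qi + δ • qj := fun s => by abel
      have hFTC := intervalIntegral.integral_eq_sub_of_hasDerivAt
        (a := (0:ℝ)) (b := δ)
        (f := fun s : ℝ => f ((q + δ • qj) + s • qi) - f (q + s • qi))
        (f' := fun s : ℝ => qi * D ((q + δ • qj) + s • qi) - qi * D (q + s • qi))
        (fun s _ => (Hfi (q + δ • qj) s).sub (Hfi q s))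
        (by simp only [base]; exact hint)
      simp only [zero_smul, add_zero] at hFTC
      simp only [base] at hFTC
      rw [hFTC]
      abel
    -- pointwise bounds
    have hIcc : Set.uIoc (0:ℝ) δ ⊆ Set.Icc 0 δ := by
      rw [Set.uIoc_of_le hδ.le]
      exact Set.Ioc_subset_Icc_self
    have hptC : ∀ (e : ℍ), ‖e‖ = 1 → ∀ s t : ℝ, s ∈ Set.Icc (0:ℝ) δ → t ∈ Set.Icc (0:ℝ) δ →
        ‖e * C (q + s • qi + t • qj) - e * C q‖ ≤ ε := by
      intro e he s t hs ht
      rw [← mul_sub, norm_mul, he, one_mul]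
      exact hCb s t hs ht
    -- estimate 1
    have est1 : ‖(∫ t in (0:ℝ)..δ, (qj * D (q + δ • qi + t • qj) - qj * D (q + t • qj))) -
        (δ * δ) • (qj * (qi * C q))‖ ≤ ε * δ * δ := by
      have hcont1 : Continuous fun t : ℝ => qj * D (q + δ • qi + t • qj) - qj * D (q + t • qj) := by
        have e1 : ∀ t : ℝ, q + δ • qi + t • qj = (q + δ • qi) + t • qj := fun _ => rfl
        exact (continuous_const.mul (hDc.comp (hpath _ _))).sub
          (continuous_const.mul (hDc.comp (hpath _ _)))
      have hconst : (δ * δ) • (qj * (qi * C q)) =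
          ∫ _ in (0:ℝ)..δ, δ • (qj * (qi * C q)) := by
        rw [intervalIntegral.integral_const, sub_zero, smul_smul]
      rw [hconst, ← intervalIntegral.integral_sub (hcont1.intervalIntegrable _ _)
        (intervalIntegrable_const)]
      have hbound : ∀ t ∈ Set.uIoc (0:ℝ) δ,
          ‖qj * D (q + δ • qi + t • qj) - qj * D (q + t • qj) -
            δ • (qj * (qi * C q))‖ ≤ ε * δ := by
        intro t ht
        have htI : t ∈ Set.Icc (0:ℝ) δ := hIcc ht
        rw [← mul_sub qj, inner1 t,
          show δ • (qj * (qi * C q)) = qj * (δ • (qi * C q)) from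
            (mul_smul_comm δ qj _).symm,
          ← mul_sub, norm_mul, norm_qj, one_mul]
        have hconst2 : δ • (qi * C q) = ∫ _ in (0:ℝ)..δ, qi * C q := by
          rw [intervalIntegral.integral_const, sub_zero]
        have hcont2 : Continuous fun s : ℝ => qi * C (q + s • qi + t • qj) :=
          continuous_const.mul (hCc.comp ((hpath q qi).add continuous_const))
        rw [hconst2, ← intervalIntegral.integral_sub (hcont2.intervalIntegrable _ _)
          intervalIntegrable_const]
        have := intervalIntegral.norm_integral_le_of_norm_le_const (C := ε)
          (fun s hs => hptC qi norm_qi s t (hIcc hs) htI)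
        simpa [_root_.abs_of_nonneg hδ.le] using this
      have := intervalIntegral.norm_integral_le_of_norm_le_const hbound
      simpa [_root_.abs_of_nonneg hδ.le, mul_comm] using this
    -- estimate 2
    have est2 : ‖(∫ s in (0:ℝ)..δ, (qi * D (q + s • qi + δ • qj) - qi * D (q + s • qi))) -
        (δ * δ) • (qi * (qj * C q))‖ ≤ ε * δ * δ := by
      have hcont1 : Continuous fun s : ℝ => qi * D (q + s • qi + δ • qj) - qi * D (q + s • qi) :=
        (continuous_const.mul (hDc.comp ((hpath q qi).add continuous_const))).sub
          (continuous_const.mul (hDc.comp (hpath _ _)))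
      have hconst : (δ * δ) • (qi * (qj * C q)) =
          ∫ _ in (0:ℝ)..δ, δ • (qi * (qj * C q)) := by
        rw [intervalIntegral.integral_const, sub_zero, smul_smul]
      rw [hconst, ← intervalIntegral.integral_sub (hcont1.intervalIntegrable _ _)
        (intervalIntegrable_const)]
      have hbound : ∀ s ∈ Set.uIoc (0:ℝ) δ,
          ‖qi * D (q + s • qi + δ • qj) - qi * D (q + s • qi) -
            δ • (qi * (qj * C q))‖ ≤ ε * δ := by
        intro s hs
        have hsI : s ∈ Set.Icc (0:ℝ) δ := hIcc hs
        rw [← mul_sub qi, inner2 s,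
          show δ • (qi * (qj * C q)) = qi * (δ • (qj * C q)) from
            (mul_smul_comm δ qi _).symm,
          ← mul_sub, norm_mul, norm_qi, one_mul]
        have hconst2 : δ • (qj * C q) = ∫ _ in (0:ℝ)..δ, qj * C q := by
          rw [intervalIntegral.integral_const, sub_zero]
        have hcont2 : Continuous fun t : ℝ => qj * C (q + s • qi + t • qj) :=
          continuous_const.mul (hCc.comp (hpath _ _))
        rw [hconst2, ← intervalIntegral.integral_sub (hcont2.intervalIntegrable _ _)
          intervalIntegrable_const]
        have := intervalIntegral.norm_integral_le_of_norm_le_const (C := ε)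
          (fun t ht => hptC qj norm_qj s t hsI (hIcc ht))
        simpa [_root_.abs_of_nonneg hδ.le] using this
      have := intervalIntegral.norm_integral_le_of_norm_le_const hbound
      simpa [_root_.abs_of_nonneg hδ.le, mul_comm] using this
    -- combine
    have hcomb : ‖(δ * δ) • (qj * (qi * C q)) - (δ * δ) • (qi * (qj * C q))‖ ≤
        ε * δ * δ + ε * δ * δ := by
      have e : (δ * δ) • (qj * (qi * C q)) - (δ * δ) • (qi * (qj * C q)) =
          ((δ * δ) • (qj * (qi * C q)) -
            (∫ t in (0:ℝ)..δ, (qj * D (q + δ • qi + t • qj) - qj * D (q + t • qj)))) +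
          ((∫ s in (0:ℝ)..δ, (qi * D (q + s • qi + δ • qj) - qi * D (q + s • qi))) -
            (δ * δ) • (qi * (qj * C q))) := by
        rw [outer1, outer2]
        abel
      rw [e]
      refine le_trans (norm_add_le _ _) (add_le_add ?_ est2)
      rw [norm_sub_rev]
      exact est1
    have hval : qj * (qi * C q) - qi * (qj * C q) = (-2 : ℝ) • (qk * C q) := by
      rw [← mul_assoc, ← mul_assoc, qj_mul_qi, qi_mul_qj, neg_mul,
        show ((-2 : ℝ)) • (qk * C q) = -((qk * C q) + (qk * C q)) by
          rw [neg_smul, two_smul]]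
      abel
    have hnorm : ‖(δ * δ) • (qj * (qi * C q)) - (δ * δ) • (qi * (qj * C q))‖ =
        (δ * δ) * (2 * ‖C q‖) := by
      rw [← smul_sub, hval, norm_smul, norm_smul, Real.norm_eq_abs, Real.norm_eq_abs,
        _root_.abs_of_nonneg (by positivity : (0:ℝ) ≤ δ * δ), norm_mul, norm_qk, one_mul]
      norm_num
    rw [hnorm] at hcomb
    have hδ2 : 0 < δ * δ := by positivity
    nlinarith [hcomb, hδ2, norm_nonneg (C q)]
  have h0 : ‖C q‖ ≤ 0 := le_of_forall_pos_le_add (by intro ε hε; simpa using key ε hε)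
  exact norm_le_zero_iff.mp h0

end Schwarz
end Stmt2Aux

open Stmt2Aux

/-- If `f : ℍ → ℍ` is quaternion-differentiable on the left at every point,
then `f q = a + q * b` for some fixed quaternions `a, b`. -/
theorem stmt_2 (f : Quaternion ℝ → Quaternion ℝ)
    (hf : ∀ q : Quaternion ℝ, ∃ d : Quaternion ℝ,
      Filter.Tendsto (fun h : Quaternion ℝ => h⁻¹ * (f (q + h) - f q))
        (nhdsWithin 0 {0}ᶜ) (nhds d)) :
    ∃ a b : Quaternion ℝ, ∀ q : Quaternion ℝ, f q = a + q * b := by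
  classical
  choose D hD using hf
  have hQD : QDiff f D := fun q => hD q
  have S1 : SliceDeriv f D := slice_hasDerivAt hQD
  have S2 : SliceDeriv D (Cof D) := level2 S1
  have hfc : Continuous f := continuous_of_qdiff hQD
  have hDc : Continuous D := by
    rw [show D = Rep f from funext (rep_eq S1)]
    exact rep_continuous hfc
  have hCc : Continuous (Cof D) := by
    rw [show Cof D = Rep D from funext (rep_eq S2)]
    exact rep_continuous hDc
  -- conjugated versions
  have hQD2 : QDiff (conjF (qi + qj) f) (conjF (qi + qj) D) := qdiff_conj hQD u2_ne
  have S1u2 := slice_hasDerivAt hQD2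
  have S2u2 := level2 S1u2
  have hQD3 : QDiff (conjF (qi + qk) f) (conjF (qi + qk) D) := qdiff_conj hQD u3_ne
  have S1u3 := slice_hasDerivAt hQD3
  have S2u3 := level2 S1u3
  -- directional derivative statements
  have Hfi := dir_i S1
  have HDi := dir_i S2
  have Hfj := dir_conj u2_ne u2_rel (fun p t => dir_i S1u2 p t)
  have HDj : ∀ q t, HasDerivAt (fun s : ℝ => D (q + s • qj)) (qj * Cof D (q + t • qj)) t := by
    apply dir_conj u2_ne u2_rel
    intro p t
    have := dir_i S2u2 p t
    rwa [cof_conj hQD u2_ne] at this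
  -- Schwarz argument: Cof D vanishes
  have hC0 : ∀ p, Cof D p = 0 := schwarz_zero hDc hCc Hfi Hfj HDi HDj
  -- D is constant on all slices
  have hconst_i : ∀ p z, D (p + φ z) = D p := slice_const_of_deriv_zero S2 hC0
  have hconst_u2 : ∀ p z, conjF (qi + qj) D (p + φ z) = conjF (qi + qj) D p := by
    apply slice_const_of_deriv_zero S2u2
    intro p
    rw [cof_conj hQD u2_ne]
    simp [conjF, hC0]
  have hconst_u3 : ∀ p z, conjF (qi + qk) D (p + φ z) = conjF (qi + qk) D p := by
    apply slice_const_of_deriv_zero S2u3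
    intro p
    rw [cof_conj hQD u3_ne]
    simp [conjF, hC0]
  have hj : ∀ q t, D (q + t • qj) = D q := conjF_slice_const u2_ne u2_rel hconst_u2
  have hk : ∀ q t, D (q + t • qk) = D q := conjF_slice_const u3_ne u3_rel hconst_u3
  -- D is globally constant
  have hDconst : ∀ q : ℍ, D q = D 0 := by
    intro q
    have h1 : q = ((0 + φ ⟨q.re, q.imI⟩) + q.imJ • qj) + q.imK • qk := by
      rw [zero_add]
      ext <;> simp only [Quaternion.re_add, Quaternion.imI_add, Quaternion.imJ_add, Quaternion.imK_add] <;>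
        simp [φ_apply, Quaternion.re_zero, Quaternion.imI_zero, Quaternion.imJ_zero, Quaternion.imK_zero, Quaternion.re_coe, Quaternion.imI_coe, Quaternion.imJ_coe, Quaternion.imK_coe, Quaternion.re_smul]
    rw [h1, hk, hj, hconst_i]
  set b := D 0 with hb
  set R : ℍ →L[ℝ] ℍ := (ContinuousLinearMap.mul ℝ ℍ).flip b with hR
  have hRapp : ∀ x : ℍ, R x = x * b := fun x => rfl
  have hfd : ∀ q, HasFDerivAt f R q := by
    intro q
    rw [hasFDerivAt_iff_isLittleO_nhds_zero, Asymptotics.isLittleO_iff]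
    intro c hc
    have htend := hD q
    rw [hDconst q] at htend
    have hev : ∀ᶠ h : ℍ in 𝓝[≠] 0, ‖h⁻¹ * (f (q + h) - f q) - b‖ ≤ c := by
      filter_upwards [htend (Metric.closedBall_mem_nhds b hc)] with h hh
      simpa [Metric.mem_closedBall, dist_eq_norm] using hh
    rw [← nhdsNE_sup_pure, eventually_sup]
    constructor
    · filter_upwards [hev, eventually_mem_nhdsWithin] with h hh hne
      simp only [Set.mem_compl_iff, Set.mem_singleton_iff] at hne
      have heq : f (q + h) - f q - R h = h * (h⁻¹ * (f (q + h) - f q) - b) := by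
        rw [hRapp, mul_sub, ← mul_assoc, mul_inv_cancel₀ hne, one_mul]
      rw [heq, norm_mul, mul_comm]
      exact mul_le_mul_of_nonneg_right hh (norm_nonneg _)
    · rw [eventually_pure]
      simp [hRapp]
  have hzero : ∀ q, HasFDerivAt (fun q : ℍ => f q - q * b) (0 : ℍ →L[ℝ] ℍ) q := by
    intro q
    have h2 : HasFDerivAt (fun q : ℍ => q * b) R q := by
      have := R.hasFDerivAt (x := q)
      apply this.congr_of_eventuallyEq
      filter_upwards with x
      rw [hRapp]
    have := (hfd q).sub h2
    rwa [sub_self] at this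
  have hconstf : ∀ q : ℍ, f q - q * b = f 0 - 0 * b := by
    intro q
    exact is_const_of_fderiv_eq_zero (𝕜 := ℝ)
      (fun x => ((hzero x).differentiableAt))
      (fun x => (hzero x).fderiv) q 0
  refine ⟨f 0, b, fun q => ?_⟩
  have := hconstf q
  rw [zero_mul, sub_zero] at this
  rw [← this]; abel
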